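/- Let J ≥ 3 be an integer, λ > 0 and s > 0, and let X_1, …, X_J be i.i.d. random variables each having the exponential distribution with rate λ. Set S := X_1 + ⋯ + X_J and M := max_i X_i. Then P( S·(S + s)/(2M) − S > s·(5/4 − J/2) ) ≥ 1 − J·(1/2)^{J−1}·e^{−λs}. -/

import Mathlib

open MeasureTheory ProbabilityTheory

section aux
open Real Set

lemma expMeasure_def (r : ℝ) : expMeasure r = volume.withDensity (exponentialPDF r) := rfl

lemma exp_singleton (r a : ℝ) : expMeasure r {a} = 0 := by
  rw [expMeasure_def]
  exact (withDensity_absolutelyContinuous volume _) (Real.volume_singleton)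

lemma exp_Iic {l : ℝ} (hl : 0 < l) (a : ℝ) :
    expMeasure l (Iic a) = ENNReal.ofReal (1 - Real.exp (-(l * a))) := by
  have hprob := isProbabilityMeasure_expMeasure hl
  have h1 : (expMeasure l (Iic a)).toReal = cdf (expMeasure l) a := by rw [cdf_eq_real]; rfl
  rcases le_or_gt 0 a with ha | ha
  · rw [cdf_expMeasure_eq hl, if_pos ha] at h1
    rw [← ENNReal.ofReal_toReal (measure_ne_top _ _), h1]
  · rw [cdf_expMeasure_eq hl, if_neg (not_le.mpr ha)] at h1
    have h2 : expMeasure l (Iic a) = 0 := by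
      have := ENNReal.toReal_eq_zero_iff (expMeasure l (Iic a))
      rw [h1] at this; exact (this.mp rfl).resolve_right (measure_ne_top _ _)
    rw [h2]
    symm
    rw [ENNReal.ofReal_eq_zero]
    have : (1:ℝ) ≤ Real.exp (-(l * a)) := by
      apply Real.one_le_exp; nlinarith
    linarith

lemma exp_tail {l : ℝ} (hl : 0 < l) (a : ℝ) :
    expMeasure l {x | a ≤ x} ≤ ENNReal.ofReal (Real.exp (-(l * a))) := by
  have hprob := isProbabilityMeasure_expMeasure hl
  show expMeasure l (Ici a) ≤ _
  rcases le_or_gt 0 a with ha | ha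
  · have hIio : expMeasure l (Iio a) = expMeasure l (Iic a) := by
      rw [← Set.Iic_diff_right]; exact measure_diff_null (exp_singleton l a)
    have : expMeasure l (Ici a) = 1 - expMeasure l (Iio a) := by
      rw [← Set.compl_Iio]
      exact prob_compl_eq_one_sub measurableSet_Iio
    rw [this, hIio, exp_Iic hl]
    have he1 : Real.exp (-(l * a)) ≤ 1 := by
      apply Real.exp_le_one_iff.mpr; nlinarith
    rw [← ENNReal.ofReal_one, ← ENNReal.ofReal_sub _ (by linarith)]
    apply le_of_eq; congr 1; ring
  · calc expMeasure l (Ici a) ≤ 1 := prob_le_one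
    _ = ENNReal.ofReal 1 := ENNReal.ofReal_one.symm
    _ ≤ _ := ENNReal.ofReal_le_ofReal (Real.one_le_exp (by nlinarith))


lemma expMeasure_def' (r : ℝ) : expMeasure r = volume.withDensity (exponentialPDF r) := rfl

lemma measurable_expPDF (r : ℝ) : Measurable (exponentialPDF r) :=
  (measurable_exponentialPDFReal r).ennreal_ofReal

lemma exp_half {l : ℝ} (hl : 0 < l) :
    ∫⁻ x, ENNReal.ofReal (Real.exp (-(l * x))) ∂(expMeasure l) = ENNReal.ofReal (1/2) := by
  have h2l : 0 < 2 * l := by linarith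
  have hg : Measurable fun x : ℝ => ENNReal.ofReal (Real.exp (-(l * x))) := by
    apply Measurable.ennreal_ofReal; exact (measurable_const.mul measurable_id).neg.exp
  rw [expMeasure_def', lintegral_withDensity_eq_lintegral_mul _ (measurable_expPDF l) hg]
  have key : ∀ x : ℝ, (exponentialPDF l * fun x => ENNReal.ofReal (Real.exp (-(l * x)))) x
      = ENNReal.ofReal (1/2) * exponentialPDF (2*l) x := by
    intro x
    simp only [Pi.mul_apply]
    rcases le_or_gt 0 x with hx | hx
    · rw [exponentialPDF_of_nonneg hx, exponentialPDF_of_nonneg hx,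
        ← ENNReal.ofReal_mul (by positivity), ← ENNReal.ofReal_mul (by norm_num)]
      congr 1
      have : Real.exp (-(l * x)) * Real.exp (-(l * x)) = Real.exp (-(2 * l * x)) := by
        rw [← Real.exp_add]; ring_nf
      nlinarith [this]
    · rw [exponentialPDF_of_neg hx, exponentialPDF_of_neg hx, zero_mul, mul_zero]
  simp_rw [key]
  rw [lintegral_const_mul _ (measurable_expPDF (2*l)), lintegral_exponentialPDF_eq_one h2l, mul_one]


lemma laplace_sum {Ω : Type*} [MeasurableSpace Ω] (P : Measure Ω) [IsProbabilityMeasure P]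
    {J : ℕ} {l : ℝ} (hl : 0 < l) {X : Fin J → Ω → ℝ} (hX : ∀ i, Measurable (X i))
    (hindep : iIndepFun X P)
    (hXd : ∀ i, P.map (X i) = expMeasure l) (t : Finset (Fin J)) :
    ∫⁻ ω, ENNReal.ofReal (Real.exp (-(l * ∑ j ∈ t, X j ω))) ∂P
      = ENNReal.ofReal (1/2) ^ t.card := by
  classical
  have hφ : Measurable fun x : ℝ => ENNReal.ofReal (Real.exp (-(l * x))) :=
    ((measurable_const.mul measurable_id).neg.exp).ennreal_ofReal
  induction t using Finset.induction_on with
  | empty => simp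
  | @insert i t hi ih =>
    rw [Finset.card_insert_of_notMem hi, pow_succ']
    have hsum : Measurable fun ω => ∑ j ∈ t, X j ω := by
      apply Finset.measurable_sum; intro j _; exact hX j
    have hkey : ∀ ω, ENNReal.ofReal (Real.exp (-(l * ∑ j ∈ insert i t, X j ω)))
        = ENNReal.ofReal (Real.exp (-(l * X i ω))) *
          ENNReal.ofReal (Real.exp (-(l * ∑ j ∈ t, X j ω))) := by
      intro ω
      rw [Finset.sum_insert hi, ← ENNReal.ofReal_mul (Real.exp_nonneg _), ← Real.exp_add]
      congr 2; ring
    simp_rw [hkey]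
    have hbase : IndepFun (X i) (∑ j ∈ t, X j) P :=
      (hindep.indepFun_finsetSum_of_notMem hX hi).symm
    have hind2 : IndepFun (fun ω => ENNReal.ofReal (Real.exp (-(l * X i ω))))
        (fun ω => ENNReal.ofReal (Real.exp (-(l * ∑ j ∈ t, X j ω)))) P := by
      have := hbase.comp hφ hφ
      have he : ((fun x : ℝ => ENNReal.ofReal (Real.exp (-(l * x)))) ∘ (∑ j ∈ t, X j))
          = fun ω => ENNReal.ofReal (Real.exp (-(l * ∑ j ∈ t, X j ω))) := by
        funext ω; simp [Function.comp, Finset.sum_apply]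
      rwa [he] at this
    have hf : AEMeasurable (fun ω => ENNReal.ofReal (Real.exp (-(l * X i ω)))) P :=
      (hφ.comp (hX i)).aemeasurable
    have hg2 : AEMeasurable (fun ω => ENNReal.ofReal (Real.exp (-(l * ∑ j ∈ t, X j ω)))) P :=
      (hφ.comp hsum).aemeasurable
    rw [lintegral_mul_eq_lintegral_mul_lintegral_of_indepFun'' hf hg2 hind2, ih]
    congr 1
    rw [← lintegral_map hφ (hX i), hXd i, exp_half hl]


lemma key_bound {Ω : Type*} [MeasurableSpace Ω] (P : Measure Ω) [IsProbabilityMeasure P]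
    {J : ℕ} {l : ℝ} (hl : 0 < l) {s : ℝ} (hs : 0 < s)
    {X : Fin J → Ω → ℝ} (hX : ∀ i, Measurable (X i))
    (hindep : iIndepFun X P)
    (hXd : ∀ i, P.map (X i) = expMeasure l) (i : Fin J) :
    P {ω | (∑ j ∈ Finset.univ.erase i, X j ω) + s ≤ X i ω}
      ≤ ENNReal.ofReal ((1/2)^(J-1) * Real.exp (-(l * s))) := by
  classical
  have hprob := isProbabilityMeasure_expMeasure hl
  set T : Ω → ℝ := fun ω => ∑ j ∈ Finset.univ.erase i, X j ω with hT_def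
  have hT : Measurable T := Finset.measurable_sum _ fun j _ => hX j
  have hφ : Measurable fun x : ℝ => ENNReal.ofReal (Real.exp (-(l * x))) :=
    ((measurable_const.mul measurable_id).neg.exp).ennreal_ofReal
  have hbase : IndepFun (∑ j ∈ Finset.univ.erase i, X j) (X i) P :=
    hindep.indepFun_finsetSum_of_notMem hX (Finset.notMem_erase i _)
  have hbase' : IndepFun T (X i) P := by
    have he : (∑ j ∈ Finset.univ.erase i, X j) = T := by
      funext ω; simp [hT_def, Finset.sum_apply]
    rwa [he] at hbase
  have hmap : P.map (fun ω => (T ω, X i ω)) = (P.map T).prod (P.map (X i)) :=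
    (indepFun_iff_map_prod_eq_prod_map_map hT.aemeasurable (hX i).aemeasurable).mp hbase'
  have hC : MeasurableSet {p : ℝ × ℝ | p.1 + s ≤ p.2} :=
    measurableSet_le (measurable_fst.add_const s) measurable_snd
  have h1 : P {ω | T ω + s ≤ X i ω}
      = ((P.map T).prod (expMeasure l)) {p : ℝ × ℝ | p.1 + s ≤ p.2} := by
    rw [← hXd i, ← hmap, Measure.map_apply (hT.prodMk (hX i)) hC]
    rfl
  have h2 : ((P.map T).prod (expMeasure l)) {p : ℝ × ℝ | p.1 + s ≤ p.2}
      = ∫⁻ t, expMeasure l {x | t + s ≤ x} ∂(P.map T) := by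
    rw [Measure.prod_apply hC]
    rfl
  have h3 : ∫⁻ t, expMeasure l {x | t + s ≤ x} ∂(P.map T)
      ≤ ∫⁻ t, ENNReal.ofReal (Real.exp (-(l * t))) * ENNReal.ofReal (Real.exp (-(l * s)))
          ∂(P.map T) := by
    apply lintegral_mono
    intro t
    calc expMeasure l {x | t + s ≤ x} ≤ ENNReal.ofReal (Real.exp (-(l * (t + s)))) :=
          exp_tail hl (t + s)
      _ = _ := by
          show _ = ENNReal.ofReal (Real.exp (-(l * t))) * ENNReal.ofReal (Real.exp (-(l * s)))
          rw [← ENNReal.ofReal_mul (Real.exp_nonneg _), ← Real.exp_add]; congr 2; ring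
  have h4 : ∫⁻ t, ENNReal.ofReal (Real.exp (-(l * t))) * ENNReal.ofReal (Real.exp (-(l * s)))
      ∂(P.map T) = ENNReal.ofReal (1/2) ^ (J-1) * ENNReal.ofReal (Real.exp (-(l * s))) := by
    rw [lintegral_mul_const' _ _ ENNReal.ofReal_ne_top]
    congr 1
    rw [lintegral_map hφ hT, laplace_sum P hl hX hindep hXd]
    congr 1
    rw [Finset.card_erase_of_mem (Finset.mem_univ i), Finset.card_univ, Fintype.card_fin]
  calc P {ω | T ω + s ≤ X i ω} ≤ ENNReal.ofReal (1/2) ^ (J-1) * ENNReal.ofReal (Real.exp (-(l * s))) := by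
        rw [h1, h2]; exact le_trans h3 (le_of_eq h4)
    _ = ENNReal.ofReal ((1/2)^(J-1) * Real.exp (-(l * s))) := by
        rw [← ENNReal.ofReal_pow (by norm_num), ← ENNReal.ofReal_mul (by positivity)]



end aux

open Real Set in
/-- Let `J ≥ 3`, `λ > 0`, `s > 0`, and let `X_1, …, X_J` be
i.i.d. exponential with rate `λ`. With `S := ∑ i, X_i` and `M := max_i X_i`,
`P(S(S + s)/(2M) − S > s(5/4 − J/2)) ≥ 1 − J (1/2)^{J−1} e^{−λs}`. -/
theorem stmt_19 {Ω : Type*} [MeasurableSpace Ω] (P : Measure Ω) [IsProbabilityMeasure P]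
    (J : ℕ) (hJ : 3 ≤ J) (l : ℝ) (hl : 0 < l) (s : ℝ) (hs : 0 < s)
    (X : Fin J → Ω → ℝ) (hX : ∀ i, Measurable (X i))
    (hindep : iIndepFun X P)
    (hXd : ∀ i, P.map (X i) = expMeasure l)
    (S : Ω → ℝ) (hS : S = fun ω => ∑ i, X i ω)
    (M : Ω → ℝ) (hM : M = fun ω => ⨆ i, X i ω) :
    P {ω | S ω * (S ω + s) / (2 * M ω) - S ω > s * (5/4 - (J : ℝ)/2)}
      ≥ ENNReal.ofReal (1 - (J : ℝ) * (1/2)^(J - 1) * Real.exp (-(l * s))) := by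
  classical
  subst hS hM
  haveI : NeZero J := ⟨by omega⟩
  set B : Set Ω := ⋃ i, {ω | (∑ j ∈ Finset.univ.erase i, X j ω) + s ≤ X i ω} with hB_def
  have hBmeas : MeasurableSet B := by
    apply MeasurableSet.iUnion
    intro i
    exact measurableSet_le ((Finset.measurable_sum _ fun j _ => hX j).add_const s) (hX i)
  set A : Set Ω := {ω | ∀ i, 0 < X i ω} with hA_def
  -- P Aᶜ = 0
  have hAc : P Aᶜ = 0 := by
    have hsub : Aᶜ ⊆ ⋃ i, {ω | X i ω ≤ 0} := by
      intro ω hω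
      simp only [hA_def, mem_compl_iff, mem_setOf_eq, not_forall, not_lt] at hω
      obtain ⟨i, hi⟩ := hω
      exact mem_iUnion.mpr ⟨i, hi⟩
    have hzero : ∀ i : Fin J, P {ω | X i ω ≤ 0} = 0 := by
      intro i
      have : P {ω | X i ω ≤ 0} = (P.map (X i)) (Iic 0) := by
        rw [Measure.map_apply (hX i) measurableSet_Iic]; rfl
      rw [this, hXd i, exp_Iic hl]
      simp
    refine le_antisymm (le_trans (measure_mono hsub) ?_) zero_le
    calc P (⋃ i, {ω | X i ω ≤ 0}) ≤ ∑ i, P {ω | X i ω ≤ 0} := measure_iUnion_fintype_le _ _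
      _ = 0 := by simp [hzero]
  -- inclusion
  have hincl : Bᶜ ∩ A ⊆ {ω | (fun ω => ∑ i, X i ω) ω * ((fun ω => ∑ i, X i ω) ω + s) /
      (2 * (fun ω => ⨆ i, X i ω) ω) - (fun ω => ∑ i, X i ω) ω > s * (5/4 - (J : ℝ)/2)} := by
    rintro ω ⟨hωB, hωA⟩
    simp only [hB_def, mem_compl_iff, mem_iUnion, mem_setOf_eq, not_exists, not_le] at hωB
    have hωA' : ∀ i, 0 < X i ω := hωA
    set Sv := ∑ i, X i ω with hSv
    have hSpos : 0 < Sv := Finset.sum_pos (fun i _ => hωA' i) Finset.univ_nonempty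
    obtain ⟨i0, hi0⟩ := exists_eq_ciSup_of_finite (f := fun i => X i ω)
    set Mv := ⨆ i, X i ω with hMv
    have hMeq : X i0 ω = Mv := hi0
    have hMpos : 0 < Mv := hMeq ▸ hωA' i0
    have herase : ∑ j ∈ Finset.univ.erase i0, X j ω + X i0 ω = Sv := by
      rw [hSv]; exact Finset.sum_erase_add _ _ (Finset.mem_univ i0)
    have h2M : 2 * Mv < Sv + s := by
      have := hωB i0
      nlinarith [hMeq, herase]
    show s * (5/4 - (J : ℝ)/2) < Sv * (Sv + s) / (2 * Mv) - Sv
    have hJ3 : (3 : ℝ) ≤ (J : ℝ) := by exact_mod_cast hJ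
    have hneg : s * (5/4 - (J : ℝ)/2) < 0 := by nlinarith
    have hge : Sv ≤ Sv * (Sv + s) / (2 * Mv) := by
      rw [le_div_iff₀ (by linarith)]
      nlinarith
    linarith
  -- measure arithmetic
  have hBc : P Bᶜ ≤ P (Bᶜ ∩ A) := by
    have hsplit : Bᶜ ⊆ (Bᶜ ∩ A) ∪ Aᶜ := by
      intro ω hω
      by_cases h : ω ∈ A
      · exact Or.inl ⟨hω, h⟩
      · exact Or.inr h
    calc P Bᶜ ≤ P ((Bᶜ ∩ A) ∪ Aᶜ) := measure_mono hsplit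
      _ ≤ P (Bᶜ ∩ A) + P Aᶜ := measure_union_le _ _
      _ = P (Bᶜ ∩ A) := by rw [hAc, add_zero]
  have hPB : P B ≤ (J : ENNReal) * ENNReal.ofReal ((1/2)^(J-1) * Real.exp (-(l * s))) := by
    calc P B ≤ ∑ i, P {ω | (∑ j ∈ Finset.univ.erase i, X j ω) + s ≤ X i ω} :=
          measure_iUnion_fintype_le _ _
      _ ≤ ∑ _i : Fin J, ENNReal.ofReal ((1/2)^(J-1) * Real.exp (-(l * s))) :=
          Finset.sum_le_sum fun i _ => key_bound P hl hs hX hindep hXd i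
      _ = (J : ENNReal) * ENNReal.ofReal ((1/2)^(J-1) * Real.exp (-(l * s))) := by
          rw [Finset.sum_const, Finset.card_univ, Fintype.card_fin, nsmul_eq_mul]
  calc ENNReal.ofReal (1 - (J : ℝ) * (1/2)^(J - 1) * Real.exp (-(l * s)))
      = 1 - (J : ENNReal) * ENNReal.ofReal ((1/2)^(J-1) * Real.exp (-(l * s))) := by
        rw [ENNReal.ofReal_sub _ (by positivity), ENNReal.ofReal_one]
        congr 1
        rw [mul_assoc, ENNReal.ofReal_mul (by positivity), ENNReal.ofReal_natCast]
    _ ≤ 1 - P B := tsub_le_tsub_left hPB 1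
    _ = P Bᶜ := (prob_compl_eq_one_sub hBmeas).symm
    _ ≤ P (Bᶜ ∩ A) := hBc
    _ ≤ _ := measure_mono hincl
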